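/- Let Γ = {X ∈ M_{m,n} : σ(X) ∈ Δ} be an orthogonally invariant matrix set with Δ ⊂ ℝⁿ absolutely symmetric, let X ∈ Γ and H ∈ T_Γ(X). Then the second-order tangent set satisfies T²_Γ(X,H) = {W ∈ M_{m,n} : σ''(X;H,W) ∈ T²_Δ(σ(X), σ'(X;H))}. Moreover, if Δ is parabolically derivable at σ(X) for σ'(X;H), then Γ is parabolically derivable at X for H. -/

import Mathlib

open Filter Topology Matrix

noncomputable section

abbrev Mat (m n : ℕ) := Matrix (Fin m) (Fin n) ℝ

namespace Paper

/-- Frobenius (trace) inner product on real matrices. -/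
def finner {m n : ℕ} (X Y : Mat m n) : ℝ := ∑ i, ∑ j, X i j * Y i j

/-- Frobenius norm. -/
def fnorm {m n : ℕ} (X : Mat m n) : ℝ := Real.sqrt (finner X X)

/-- Euclidean inner product on `ℝⁿ`. -/
def vinner {n : ℕ} (x y : Fin n → ℝ) : ℝ := ∑ i, x i * y i

/-- Euclidean norm on `ℝⁿ`. -/
def vnorm {n : ℕ} (x : Fin n → ℝ) : ℝ := Real.sqrt (vinner x x)

/-- Eigenvalues of a real symmetric matrix, arranged in nonincreasing order. -/
def eigs {k : ℕ} (A : Matrix (Fin k) (Fin k) ℝ) (hA : A.IsHermitian) : Fin k → ℝ :=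
  fun i => hA.eigenvalues (Tuple.sort (fun j => -(hA.eigenvalues j)) i)

/-- Singular values of a real `m × n` matrix, arranged in nonincreasing order. -/
def svals {m n : ℕ} (X : Mat m n) : Fin n → ℝ :=
  fun i => Real.sqrt (eigs _ (by simpa [Matrix.conjTranspose_eq_transpose_of_trivial] using
    Matrix.isHermitian_conjTranspose_mul_self X : (Xᵀ * X).IsHermitian) i)

/-- The `m × n` matrix with `x` on the diagonal and zeros elsewhere. -/
def mdiag {m n : ℕ} (x : Fin n → ℝ) : Mat m n :=
  fun i j => if (i : ℕ) = (j : ℕ) then x j else 0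

/-- The symmetric block matrix `B(X) = [[0, X], [Xᵀ, 0]]`, reindexed over `Fin (m+n)`. -/
def bmat {m n : ℕ} (X : Mat m n) : Matrix (Fin (m + n)) (Fin (m + n)) ℝ :=
  Matrix.reindex finSumFinEquiv finSumFinEquiv (Matrix.fromBlocks 0 X Xᵀ 0)

lemma bmat_isHermitian {m n : ℕ} (X : Mat m n) : (bmat X).IsHermitian := by
  rw [Matrix.IsHermitian]
  ext i j
  simp only [bmat, Matrix.conjTranspose_apply, Matrix.reindex_apply, Matrix.submatrix_apply,
    star_trivial]
  rcases hi : finSumFinEquiv.symm i with a | a <;> rcases hj : finSumFinEquiv.symm j with b | b <;>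
    simp [Matrix.fromBlocks, Matrix.transpose_apply]

/-- Eigenvalues of `B(X)` in nonincreasing order. -/
def beigs {m n : ℕ} (X : Mat m n) : Fin (m + n) → ℝ :=
  eigs (bmat X) (bmat_isHermitian X)

/-- `Q` is a signed permutation matrix. -/
def IsSignedPerm {n : ℕ} (Q : Matrix (Fin n) (Fin n) ℝ) : Prop :=
  ∃ (e : Equiv.Perm (Fin n)) (s : Fin n → ℝ), (∀ i, s i = 1 ∨ s i = -1) ∧
    ∀ i j, Q i j = if j = e i then s i else 0

/-- A set of vectors invariant under all signed permutations. -/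
def AbsSymSet {n : ℕ} (K : Set (Fin n → ℝ)) : Prop :=
  ∀ Q, IsSignedPerm Q → ∀ x ∈ K, Q.mulVec x ∈ K

/-- An extended-real-valued absolutely symmetric function. -/
def AbsSymFun {n : ℕ} (f : (Fin n → ℝ) → EReal) : Prop :=
  ∀ Q, IsSignedPerm Q → ∀ x, f (Q.mulVec x) = f x

/-- Euclidean distance from a point to a set in `ℝⁿ`. -/
def vdist {n : ℕ} (x : Fin n → ℝ) (K : Set (Fin n → ℝ)) : ℝ :=
  sInf ((fun y => vnorm (x - y)) '' K)

/-- Frobenius distance from a matrix to a set of matrices. -/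
def mdist {m n : ℕ} (X : Mat m n) (Γ : Set (Mat m n)) : ℝ :=
  sInf ((fun Y => fnorm (X - Y)) '' Γ)

section Variational

variable {E : Type*} [AddCommGroup E] [Module ℝ E] [TopologicalSpace E]

/-- The subderivative `dg(x)(w) = liminf_{t↓0, w'→w} (g(x+tw') - g(x))/t`. -/
def subderiv (g : E → EReal) (x w : E) : EReal :=
  liminf (fun p : ℝ × E => ((p.1⁻¹ : ℝ) : EReal) * (g (x + p.1 • p.2) - g x))
    ((𝓝[>] (0 : ℝ)) ×ˢ 𝓝 w)

/-- The second-order difference quotient `Δ²_τ g(x | v)(w)`. -/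
def secondQuot (ip : E → E → ℝ) (g : E → EReal) (x v : E) (τ : ℝ) (w : E) : EReal :=
  ((2 / τ ^ 2 : ℝ) : EReal) * (g (x + τ • w) - g x - ((τ * ip v w : ℝ) : EReal))

/-- The second subderivative `d²g(x | v)(w)`. -/
def secondSubderiv (ip : E → E → ℝ) (g : E → EReal) (x v w : E) : EReal :=
  liminf (fun p : ℝ × E => secondQuot ip g x v p.1 p.2) ((𝓝[>] (0 : ℝ)) ×ˢ 𝓝 w)

/-- The parabolic difference quotient `Δ²_τ g(x)(w | z)`. -/
def parabQuot (g : E → EReal) (x w : E) (τ : ℝ) (z : E) : EReal :=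
  ((2 / τ ^ 2 : ℝ) : EReal) *
    (g (x + τ • w + (τ ^ 2 / 2) • z) - g x - ((τ : ℝ) : EReal) * subderiv g x w)

/-- The parabolic subderivative `d²g(x)(w | z)`. -/
def parabolicSubderiv (g : E → EReal) (x w z : E) : EReal :=
  liminf (fun p : ℝ × E => parabQuot g x w p.1 p.2) ((𝓝[>] (0 : ℝ)) ×ˢ 𝓝 z)

/-- Parabolic epi-differentiability of `g` at `x` for `w`. -/
def ParabEpiDiffAt (g : E → EReal) (x w : E) : Prop :=
  (∃ z, parabolicSubderiv g x w z < ⊤) ∧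
  ∀ z : E, ∀ t : ℕ → ℝ, (∀ k, 0 < t k) → Tendsto t atTop (𝓝 0) →
    ∃ zk : ℕ → E, Tendsto zk atTop (𝓝 z) ∧
      Tendsto (fun k => parabQuot g x w (t k) (zk k)) atTop (𝓝 (parabolicSubderiv g x w z))

/-- The (contingent) tangent cone to `C` at `x`. -/
def tangentConeOf (C : Set E) (x : E) : Set E :=
  {w | ∃ t : ℕ → ℝ, ∃ w' : ℕ → E, (∀ k, 0 < t k) ∧ Tendsto t atTop (𝓝 0) ∧
    Tendsto w' atTop (𝓝 w) ∧ ∀ k, x + t k • w' k ∈ C}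

/-- The second-order tangent set to `C` at `x` for `w`. -/
def tangentCone2Of (C : Set E) (x w : E) : Set E :=
  {u | ∃ t : ℕ → ℝ, ∃ u' : ℕ → E, (∀ k, 0 < t k) ∧ Tendsto t atTop (𝓝 0) ∧
    Tendsto u' atTop (𝓝 u) ∧ ∀ k, x + t k • w + (t k ^ 2 / 2) • u' k ∈ C}

/-- Parabolic derivability of the set `C` at `x` for `w`. -/
def ParabolicallyDerivable (C : Set E) (x w : E) : Prop :=
  (tangentCone2Of C x w).Nonempty ∧
  ∀ u ∈ tangentCone2Of C x w, ∃ ε > (0 : ℝ), ∃ ξ : ℝ → E,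
    (∀ t ∈ Set.Icc (0 : ℝ) ε, ξ t ∈ C) ∧ ξ 0 = x ∧
    Tendsto (fun t : ℝ => t⁻¹ • (ξ t - x)) (𝓝[>] 0) (𝓝 w) ∧
    Tendsto (fun t : ℝ => (2 / t ^ 2) • (ξ t - x - t • w)) (𝓝[>] 0) (𝓝 u)

/-- The convex subdifferential of `g` at `x` (w.r.t. the pairing `ip`). -/
def convSubdiff (ip : E → E → ℝ) (g : E → EReal) (x : E) : Set E :=
  {v | ∀ y, ((ip v (y - x) : ℝ) : EReal) + g x ≤ g y}

/-- Convexity for extended-real-valued functions. -/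
def ConvexEReal (g : E → EReal) : Prop :=
  ∀ x y : E, ∀ t : ℝ, 0 ≤ t → t ≤ 1 →
    g (t • x + (1 - t) • y) ≤ ((t : ℝ) : EReal) * g x + ((1 - t : ℝ) : EReal) * g y

end Variational

/-- Local Lipschitz continuity of `f` relative to its domain (everywhere on the domain). -/
def LocLipRelDom {n : ℕ} (f : (Fin n → ℝ) → EReal) : Prop :=
  ∀ x, f x ≠ ⊤ → ∃ l ≥ (0 : ℝ), ∃ U ∈ 𝓝 x, ∀ y ∈ U, ∀ z ∈ U, f y ≠ ⊤ → f z ≠ ⊤ →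
    |(f y).toReal - (f z).toReal| ≤ l * vnorm (y - z)

/-- The columns of `U` with indices `r, r+1, …, k-1`. -/
def colsFrom {k : ℕ} (r : ℕ) (U : Matrix (Fin k) (Fin k) ℝ) :
    Matrix (Fin k) (Fin (k - r)) ℝ :=
  fun i j => U i ⟨r + (j : ℕ), by have := j.isLt; omega⟩

/-- The first `r` columns of `U`. -/
def firstCols {k : ℕ} (r : ℕ) (h : r ≤ k) (U : Matrix (Fin k) (Fin k) ℝ) :
    Matrix (Fin k) (Fin r) ℝ :=
  fun i j => U i (Fin.castLE h j)

/-- The submatrix of `M` with rows `a ≤ · < b` and columns `c ≤ · < d`. -/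
def subBlock {p q : ℕ} (M : Matrix (Fin p) (Fin q) ℝ) (a b c d : ℕ)
    (h1 : b ≤ p) (h2 : d ≤ q) : Matrix (Fin (b - a)) (Fin (d - c)) ℝ :=
  fun i j => M ⟨a + (i : ℕ), by have := i.isLt; omega⟩ ⟨c + (j : ℕ), by have := j.isLt; omega⟩

/-- Nuclear norm: the sum of all singular values. -/
def nucNorm {m n : ℕ} (A : Mat m n) : ℝ := ∑ j, svals A j

/-- `Ψₙ(X) = σ_{r+1}(X) + ⋯ + σ_n(X)`, the sum of the `n - r` smallest singular values. -/
def psiN {m n : ℕ} (r : ℕ) (X : Mat m n) : ℝ :=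
  ∑ s : Fin n, if r ≤ (s : ℕ) then svals X s else 0

/-- The regular (Fréchet) subdifferential of a real-valued function on matrices. -/
def regSubdiff {m n : ℕ} (g : Mat m n → ℝ) (X : Mat m n) : Set (Mat m n) :=
  {V | ∀ ε > (0 : ℝ), ∀ᶠ Y in 𝓝 X, g X + finner V (Y - X) - ε * fnorm (Y - X) ≤ g Y}

/-- Two square matrices admit a simultaneous ordered spectral decomposition. -/
def SimSpec {k : ℕ} (A B : Matrix (Fin k) (Fin k) ℝ) : Prop :=
  ∃ (W : Matrix (Fin k) (Fin k) ℝ) (a b : Fin k → ℝ), Wᵀ * W = 1 ∧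
    Antitone a ∧ Antitone b ∧
    A = W * Matrix.diagonal a * Wᵀ ∧ B = W * Matrix.diagonal b * Wᵀ

/-- Two rectangular matrices admit a simultaneous ordered singular value decomposition. -/
def SimSVD {p q : ℕ} (A B : Matrix (Fin p) (Fin q) ℝ) : Prop :=
  ∃ (U : Matrix (Fin p) (Fin p) ℝ) (V : Matrix (Fin q) (Fin q) ℝ)
    (a b : Fin q → ℝ), Uᵀ * U = 1 ∧ Vᵀ * V = 1 ∧
    Antitone a ∧ Antitone b ∧ (∀ j, 0 ≤ a j) ∧ (∀ j, 0 ≤ b j) ∧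
    A = U * mdiag (m := p) a * Vᵀ ∧ B = U * mdiag (m := p) b * Vᵀ

end Paper

open Paper

theorem Matrix.isHermitian_transpose_mul_self {m n : ℕ} (X : Mat m n) : (Xᵀ * X).IsHermitian := by
  simpa [Matrix.conjTranspose_eq_transpose_of_trivial] using
    Matrix.isHermitian_conjTranspose_mul_self X

namespace Aux
open Paper

/-! ### Vector norm basics -/

def toE {n : ℕ} (x : Fin n → ℝ) : EuclideanSpace ℝ (Fin n) := WithLp.toLp 2 x

lemma vinner_eq_inner {n : ℕ} (x y : Fin n → ℝ) :
    vinner x y = (inner ℝ (toE x) (toE y) : ℝ) := by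
  rw [PiLp.inner_apply]
  simp [vinner, toE, RCLike.inner_apply, mul_comm]

lemma vinner_self_nonneg {n : ℕ} (x : Fin n → ℝ) : 0 ≤ vinner x x :=
  Finset.sum_nonneg fun i _ => mul_self_nonneg _

lemma vnorm_eq_norm {n : ℕ} (x : Fin n → ℝ) : vnorm x = ‖toE x‖ := by
  rw [EuclideanSpace.norm_eq]
  unfold vnorm vinner
  congr 1
  apply Finset.sum_congr rfl
  intro i _
  simp [toE, Real.norm_eq_abs, sq_abs, sq]

lemma vnorm_nonneg {n : ℕ} (x : Fin n → ℝ) : 0 ≤ vnorm x := Real.sqrt_nonneg _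

lemma vnorm_zero {n : ℕ} : vnorm (0 : Fin n → ℝ) = 0 := by
  simp [vnorm, vinner]

lemma sq_vnorm {n : ℕ} (x : Fin n → ℝ) : vnorm x ^ 2 = vinner x x := by
  rw [vnorm, Real.sq_sqrt (vinner_self_nonneg x)]

lemma vnorm_add_le {n : ℕ} (x y : Fin n → ℝ) : vnorm (x + y) ≤ vnorm x + vnorm y := by
  rw [vnorm_eq_norm, vnorm_eq_norm, vnorm_eq_norm]
  exact norm_add_le (toE x) (toE y)

lemma vnorm_smul {n : ℕ} (c : ℝ) (x : Fin n → ℝ) : vnorm (c • x) = |c| * vnorm x := by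
  rw [vnorm_eq_norm, vnorm_eq_norm]
  have : toE (c • x) = c • toE x := rfl
  rw [this, norm_smul, Real.norm_eq_abs]

lemma abs_le_vnorm {n : ℕ} (x : Fin n → ℝ) (i : Fin n) : |x i| ≤ vnorm x := by
  have h1 : x i * x i ≤ vinner x x := by
    have := Finset.single_le_sum (f := fun j => x j * x j)
      (fun j _ => mul_self_nonneg (x j)) (Finset.mem_univ i)
    exact this
  calc |x i| = Real.sqrt (x i * x i) := by rw [Real.sqrt_mul_self_eq_abs]
    _ ≤ Real.sqrt (vinner x x) := Real.sqrt_le_sqrt h1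

lemma vinner_self_pos {n : ℕ} (x : Fin n → ℝ) (hx : x ≠ 0) : 0 < vinner x x := by
  rcases (vinner_self_nonneg x).lt_or_eq with h | h
  · exact h
  · exfalso; apply hx
    have h0 : ∀ i ∈ Finset.univ, x i * x i = 0 := by
      rw [← Finset.sum_eq_zero_iff_of_nonneg (fun i _ => mul_self_nonneg (x i))]
      exact h.symm
    funext i
    exact mul_self_eq_zero.mp (h0 i (Finset.mem_univ i))

lemma vnorm_le_sum_abs {n : ℕ} (x : Fin n → ℝ) : vnorm x ≤ ∑ i, |x i| := by
  have h : vinner x x ≤ (∑ i, |x i|) ^ 2 := by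
    calc vinner x x = ∑ i, |x i| * |x i| := by
          unfold vinner; apply Finset.sum_congr rfl; intro i _; rw [abs_mul_abs_self]
      _ ≤ ∑ i, |x i| * (∑ j, |x j|) := by
          apply Finset.sum_le_sum
          intro i _
          exact mul_le_mul_of_nonneg_left (Finset.single_le_sum (f := fun j => |x j|)
            (fun j _ => abs_nonneg _) (Finset.mem_univ i)) (abs_nonneg _)
      _ = (∑ i, |x i|) ^ 2 := by rw [← Finset.sum_mul, sq]
  calc vnorm x ≤ Real.sqrt ((∑ i, |x i|) ^ 2) := Real.sqrt_le_sqrt h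
    _ = ∑ i, |x i| := Real.sqrt_sq (Finset.sum_nonneg fun i _ => abs_nonneg _)

lemma sqrt_mul_sqrt (a b : ℝ) (hb : 0 ≤ b) :
    Real.sqrt a * Real.sqrt b = Real.sqrt (a * b) := by
  rw [mul_comm a b, Real.sqrt_mul hb, mul_comm]

/-! ### Frobenius norm basics -/

lemma finner_self_nonneg {m n : ℕ} (A : Mat m n) : 0 ≤ finner A A :=
  Finset.sum_nonneg fun i _ => Finset.sum_nonneg fun j _ => mul_self_nonneg _

lemma fnorm_nonneg {m n : ℕ} (A : Mat m n) : 0 ≤ fnorm A := Real.sqrt_nonneg _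

lemma sq_fnorm {m n : ℕ} (A : Mat m n) : fnorm A ^ 2 = finner A A := by
  rw [fnorm, Real.sq_sqrt (finner_self_nonneg A)]

lemma abs_le_fnorm {m n : ℕ} (A : Mat m n) (i : Fin m) (j : Fin n) : |A i j| ≤ fnorm A := by
  have h1 : A i j * A i j ≤ finner A A := by
    have h2 : A i j * A i j ≤ ∑ j', A i j' * A i j' :=
      Finset.single_le_sum (f := fun j' => A i j' * A i j') (fun j' _ => mul_self_nonneg _)
        (Finset.mem_univ j)
    have h3 : ∑ j', A i j' * A i j' ≤ finner A A :=
      Finset.single_le_sum (f := fun i' => ∑ j', A i' j' * A i' j')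
        (fun i' _ => Finset.sum_nonneg fun j' _ => mul_self_nonneg _) (Finset.mem_univ i)
    linarith
  calc |A i j| = Real.sqrt (A i j * A i j) := by rw [Real.sqrt_mul_self_eq_abs]
    _ ≤ Real.sqrt (finner A A) := Real.sqrt_le_sqrt h1

lemma fnorm_sub_comm {m n : ℕ} (A B : Mat m n) : fnorm (A - B) = fnorm (B - A) := by
  unfold fnorm finner
  congr 1
  apply Finset.sum_congr rfl; intro i _
  apply Finset.sum_congr rfl; intro j _
  have : (A - B) i j = -((B - A) i j) := by simp
  rw [this]; ring

lemma finner_eq_trace {m n : ℕ} (A : Mat m n) : finner A A = Matrix.trace (Aᵀ * A) := by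
  unfold finner Matrix.trace
  rw [Finset.sum_comm]
  apply Finset.sum_congr rfl
  intro j _
  simp [Matrix.mul_apply, Matrix.diag, Matrix.transpose_apply]

lemma fnorm_conj {m n : ℕ} {U : Matrix (Fin m) (Fin m) ℝ} {V : Matrix (Fin n) (Fin n) ℝ}
    (hU : Uᵀ * U = 1) (hV : Vᵀ * V = 1) (M : Mat m n) :
    fnorm (U * M * Vᵀ) = fnorm M := by
  unfold fnorm
  congr 1
  rw [finner_eq_trace, finner_eq_trace]
  have h1 : (U * M * Vᵀ)ᵀ = V * Mᵀ * Uᵀ := by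
    rw [Matrix.transpose_mul, Matrix.transpose_mul, Matrix.transpose_transpose, Matrix.mul_assoc]
  rw [h1]
  have h2 : V * Mᵀ * Uᵀ * (U * M * Vᵀ) = V * (Mᵀ * M) * Vᵀ := by
    simp only [Matrix.mul_assoc]
    rw [← Matrix.mul_assoc Uᵀ U (M * Vᵀ), hU, Matrix.one_mul]
  rw [h2, Matrix.trace_mul_comm, ← Matrix.mul_assoc, hV, Matrix.one_mul]

lemma fnorm_mdiag {m n : ℕ} (hmn : n ≤ m) (y : Fin n → ℝ) : fnorm (mdiag y : Mat m n) = vnorm y := by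
  unfold fnorm vnorm
  congr 1
  unfold finner vinner mdiag
  rw [Finset.sum_comm]
  apply Finset.sum_congr rfl
  intro j _
  rw [Finset.sum_eq_single (Fin.castLE hmn j)]
  · simp [Fin.castLE]
  · intro i _ hij
    have : ¬ ((i : ℕ) = (j : ℕ)) := by
      intro h
      apply hij
      apply Fin.ext
      simp [Fin.castLE, h]
    simp [this]
  · intro h; exact absurd (Finset.mem_univ _) h

lemma vnorm_mulVec_le {m n : ℕ} (M : Mat m n) (x : Fin n → ℝ) :
    vnorm (M *ᵥ x) ≤ fnorm M * vnorm x := by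
  have h : vinner (M *ᵥ x) (M *ᵥ x) ≤ finner M M * vinner x x := by
    unfold vinner Matrix.mulVec
    calc ∑ i, (M i ⬝ᵥ x) * (M i ⬝ᵥ x)
        ≤ ∑ i, ((∑ j, M i j ^ 2) * ∑ j, x j ^ 2) := by
          apply Finset.sum_le_sum
          intro i _
          have := Finset.sum_mul_sq_le_sq_mul_sq Finset.univ (fun j => M i j) x
          calc (M i ⬝ᵥ x) * (M i ⬝ᵥ x) = (∑ j, M i j * x j) ^ 2 := by
                rw [sq]; rfl
            _ ≤ (∑ j, M i j ^ 2) * ∑ j, x j ^ 2 := this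
      _ = finner M M * vinner x x := by
          rw [← Finset.sum_mul]
          congr 1
          · unfold finner; apply Finset.sum_congr rfl; intro i _
            apply Finset.sum_congr rfl; intro j _; rw [sq]
          · apply Finset.sum_congr rfl; intro j _; rw [sq]
  calc vnorm (M *ᵥ x) = Real.sqrt (vinner (M *ᵥ x) (M *ᵥ x)) := rfl
    _ ≤ Real.sqrt (finner M M * vinner x x) := Real.sqrt_le_sqrt h
    _ = fnorm M * vnorm x := by
        rw [Real.sqrt_mul (finner_self_nonneg M)]; rfl

end Aux
namespace Aux
open Paper Polynomial

/-! ### Sorted tuples -/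

def sortDesc {k : ℕ} (d : Fin k → ℝ) : Fin k → ℝ :=
  fun i => d (Tuple.sort (fun j => -(d j)) i)

lemma sortDesc_antitone {k : ℕ} (d : Fin k → ℝ) : Antitone (sortDesc d) := by
  intro i j hij
  have h := Tuple.monotone_sort (fun j => -(d j)) hij
  simp only [Function.comp_apply] at h
  unfold sortDesc
  linarith

/-- The multiset of values of a tuple. -/
def mlt {k : ℕ} (d : Fin k → ℝ) : Multiset ℝ := (List.ofFn d : Multiset ℝ)

lemma mlt_eq_map {k : ℕ} (d : Fin k → ℝ) : mlt d = Multiset.map d Finset.univ.val :=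
  (Fin.univ_val_map d).symm

lemma mlt_comp_perm {k : ℕ} (d : Fin k → ℝ) (e : Equiv.Perm (Fin k)) :
    mlt (d ∘ e) = mlt d := by
  rw [mlt_eq_map, mlt_eq_map]
  have h : Multiset.map (⇑e) Finset.univ.val = Finset.univ.val := by
    have := Finset.map_univ_equiv e
    calc Multiset.map (⇑e) Finset.univ.val = (Finset.univ.map e.toEmbedding).val := rfl
      _ = Finset.univ.val := by rw [this]
  calc Multiset.map (d ∘ e) Finset.univ.val = Multiset.map d (Multiset.map (⇑e) Finset.univ.val) := by
        rw [Multiset.map_map]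
    _ = Multiset.map d Finset.univ.val := by rw [h]

lemma mlt_sortDesc {k : ℕ} (d : Fin k → ℝ) : mlt (sortDesc d) = mlt d :=
  mlt_comp_perm d _

lemma mlt_comp {k : ℕ} (d : Fin k → ℝ) (h : ℝ → ℝ) : mlt (h ∘ d) = Multiset.map h (mlt d) := by
  unfold mlt
  rw [← List.map_ofFn]
  rfl

lemma antitone_eq_of_mlt_eq {k : ℕ} {f g : Fin k → ℝ} (hf : Antitone f) (hg : Antitone g)
    (h : mlt f = mlt g) : f = g := by
  haveI : IsAntisymm ℝ (· ≥ ·) := ⟨fun a b h1 h2 => le_antisymm h2 h1⟩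
  have hp : (List.ofFn f).Perm (List.ofFn g) := Multiset.coe_eq_coe.mp h
  have hsf : List.Pairwise (· ≥ ·) (List.ofFn f) :=
    List.pairwise_ofFn.mpr fun i j hij => hf hij.le
  have hsg : List.Pairwise (· ≥ ·) (List.ofFn g) :=
    List.pairwise_ofFn.mpr fun i j hij => hg hij.le
  have heq : List.ofFn f = List.ofFn g := List.Perm.eq_of_pairwise (fun a b _ _ h1 h2 => le_antisymm h2 h1) hsf hsg hp
  exact List.ofFn_inj.mp heq

/-! ### Eigenvalues of conjugated diagonal matrices -/

lemma charpoly_conj {k : ℕ} (P A : Matrix (Fin k) (Fin k) ℝ) (hP : Pᵀ * P = 1) :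
    Matrix.charpoly (P * A * Pᵀ) = Matrix.charpoly A := by
  have hP' : P * Pᵀ = 1 := mul_eq_one_comm.mp hP
  have key : Matrix.charmatrix (P * A * Pᵀ) =
      P.map C * Matrix.charmatrix A * Pᵀ.map C := by
    have h1 : Matrix.charmatrix (P * A * Pᵀ) =
        Matrix.scalar (Fin k) X - (P * A * Pᵀ).map C := rfl
    have h2 : Matrix.charmatrix A = Matrix.scalar (Fin k) X - A.map C := rfl
    rw [h1, h2, Matrix.mul_sub, Matrix.sub_mul]
    congr 1
    · -- P.map C * scalar X * Pᵀ.map C = scalar X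
      have hcomm : P.map C * Matrix.scalar (Fin k) X = Matrix.scalar (Fin k) X * P.map C := by
        rw [Matrix.scalar_commute]
        intro r
        exact Commute.all _ _
      rw [hcomm, Matrix.mul_assoc]
      have hmm : (P * Pᵀ).map (⇑(C : ℝ →+* ℝ[X])) = P.map ⇑C * Pᵀ.map ⇑C := Matrix.map_mul
      have : P.map (⇑(C : ℝ →+* ℝ[X])) * Pᵀ.map ⇑C = 1 := by
        rw [← hmm, hP', Matrix.map_one _ (map_zero _) (map_one _)]
      rw [this, Matrix.mul_one]
    · have hmm1 : (P * A).map (⇑(C : ℝ →+* ℝ[X])) = P.map ⇑C * A.map ⇑C := Matrix.map_mul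
      have hmm2 : (P * A * Pᵀ).map (⇑(C : ℝ →+* ℝ[X])) = (P * A).map ⇑C * Pᵀ.map ⇑C :=
        Matrix.map_mul
      rw [hmm2, hmm1]
  unfold Matrix.charpoly
  rw [key, Matrix.det_mul, Matrix.det_mul]
  have hmm : (P * Pᵀ).map (⇑(C : ℝ →+* ℝ[X])) = P.map ⇑C * Pᵀ.map ⇑C := Matrix.map_mul
  have : Matrix.det (P.map (⇑(C : ℝ →+* ℝ[X]))) * Matrix.det (Pᵀ.map ⇑C) = 1 := by
    rw [← Matrix.det_mul, ← hmm, hP', Matrix.map_one _ (map_zero _) (map_one _),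
      Matrix.det_one]
  calc (P.map C).det * (Matrix.charmatrix A).det * (Pᵀ.map C).det
      = (Matrix.charmatrix A).det * ((P.map C).det * (Pᵀ.map C).det) := by ring
    _ = (Matrix.charmatrix A).det := by rw [show (P.map C).det * (Pᵀ.map C).det = 1 from this, mul_one]

lemma charpoly_diagonal {k : ℕ} (d : Fin k → ℝ) :
    Matrix.charpoly (Matrix.diagonal d) = ∏ i, (X - C (d i)) := by
  unfold Matrix.charpoly
  have h : Matrix.charmatrix (Matrix.diagonal d) = Matrix.diagonal (fun i => X - C (d i)) := by
    ext i j
    by_cases hij : i = j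
    · subst hij; rw [Matrix.charmatrix_apply_eq]; simp [Matrix.diagonal_apply_eq]
    · rw [Matrix.charmatrix_apply_ne _ _ _ hij]
      simp [Matrix.diagonal_apply_ne _ hij, Matrix.diagonal_apply_ne d hij]
  rw [h, Matrix.det_diagonal]

/-- If `A = P * diagonal d * Pᵀ` with `P` orthogonal, the multiset of (unsorted)
eigenvalues of `A` is the multiset of values of `d`. -/
lemma mlt_eigenvalues {k : ℕ} {A P : Matrix (Fin k) (Fin k) ℝ} {d : Fin k → ℝ}
    (hA : A.IsHermitian) (hP : Pᵀ * P = 1) (hdecomp : A = P * Matrix.diagonal d * Pᵀ) :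
    mlt hA.eigenvalues = mlt d := by
  -- charpoly A = ∏ (X - C (eigenvalue i)) via the spectral theorem
  have hspec := hA.spectral_theorem
  set U : Matrix (Fin k) (Fin k) ℝ := (hA.eigenvectorUnitary : Matrix (Fin k) (Fin k) ℝ) with hU
  have hstar : star U = Uᵀ := by
    rw [Matrix.star_eq_conjTranspose]
    ext i j
    simp [Matrix.conjTranspose_apply]
  have hUorth : Uᵀ * U = 1 := by
    rw [← hstar]
    exact hA.eigenvectorUnitary.2.1
  have hdiag : Matrix.diagonal (RCLike.ofReal ∘ hA.eigenvalues) =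
      Matrix.diagonal hA.eigenvalues := by
    rw [RCLike.ofReal_real_eq_id, Function.id_comp]
  have hspec' : A = U * Matrix.diagonal hA.eigenvalues * Uᵀ := by
    rw [← hdiag, ← hstar]
    exact hspec
  have h1 : Matrix.charpoly A = ∏ i, (X - C (hA.eigenvalues i)) := by
    rw [congrArg Matrix.charpoly hspec', charpoly_conj U _ hUorth, charpoly_diagonal]
  have h2 : Matrix.charpoly A = ∏ i, (X - C (d i)) := by
    rw [congrArg Matrix.charpoly hdecomp, charpoly_conj P _ hP, charpoly_diagonal]
  -- extract multisets through roots
  have key : ∀ e : Fin k → ℝ, (∏ i, (X - C (e i))).roots = Multiset.map e Finset.univ.val := by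
    intro e
    rw [Finset.prod_eq_multiset_prod]
    have : Multiset.map (fun i => X - C (e i)) Finset.univ.val =
        Multiset.map (fun a => X - C a) (Multiset.map e Finset.univ.val) := by
      rw [Multiset.map_map]; rfl
    rw [this, Polynomial.roots_multiset_prod_X_sub_C]
  have h3 : Multiset.map hA.eigenvalues Finset.univ.val = Multiset.map d Finset.univ.val := by
    rw [← key, ← key, ← h1, ← h2]
  rw [mlt_eq_map, mlt_eq_map, h3]

lemma eigs_eq_sortDesc_eigenvalues {k : ℕ} {A : Matrix (Fin k) (Fin k) ℝ} (hA : A.IsHermitian) :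
    eigs A hA = sortDesc hA.eigenvalues := rfl

lemma eigs_antitone {k : ℕ} {A : Matrix (Fin k) (Fin k) ℝ} (hA : A.IsHermitian) :
    Antitone (eigs A hA) := sortDesc_antitone _

/-- Sorted eigenvalues of an orthogonally conjugated diagonal matrix. -/
lemma eigs_conj_diagonal {k : ℕ} {A P : Matrix (Fin k) (Fin k) ℝ} {d : Fin k → ℝ}
    (hA : A.IsHermitian) (hP : Pᵀ * P = 1) (hdecomp : A = P * Matrix.diagonal d * Pᵀ) :
    eigs A hA = sortDesc d := by
  apply antitone_eq_of_mlt_eq (eigs_antitone hA) (sortDesc_antitone d)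
  rw [eigs_eq_sortDesc_eigenvalues, mlt_sortDesc, mlt_sortDesc]
  exact mlt_eigenvalues hA hP hdecomp

end Aux
namespace Aux
open Paper

/-! ### Sorted spectral data -/

/-- The sorting permutation for the eigenvalues of `M`. -/
def sperm {k : ℕ} {M : Matrix (Fin k) (Fin k) ℝ} (hM : M.IsHermitian) : Equiv.Perm (Fin k) :=
  Tuple.sort (fun j => -(hM.eigenvalues j))

/-- The eigenvector for the `i`-th largest eigenvalue, as a plain function. -/
def svec {k : ℕ} {M : Matrix (Fin k) (Fin k) ℝ} (hM : M.IsHermitian) (i : Fin k) : Fin k → ℝ :=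
  (hM.eigenvectorBasis (sperm hM i)).ofLp

lemma mulVec_svec {k : ℕ} {M : Matrix (Fin k) (Fin k) ℝ} (hM : M.IsHermitian) (i : Fin k) :
    M *ᵥ svec hM i = eigs M hM i • svec hM i :=
  hM.mulVec_eigenvectorBasis (sperm hM i)

lemma svec_orthonormal {k : ℕ} {M : Matrix (Fin k) (Fin k) ℝ} (hM : M.IsHermitian) :
    Orthonormal ℝ (fun i => toE (svec hM i)) :=
  hM.eigenvectorBasis.orthonormal.comp (sperm hM) (Equiv.injective _)

/-- Coordinates and quadratic form over the span of an orthonormal eigen-family. -/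
lemma span_quadform {k : ℕ} {ι : Type} [Fintype ι] (M : Matrix (Fin k) (Fin k) ℝ)
    (v : ι → Fin k → ℝ) (hv : Orthonormal ℝ (fun i => toE (v i)))
    (lam : ι → ℝ) (hl : ∀ i, M *ᵥ v i = lam i • v i)
    (x : Fin k → ℝ) (hx : toE x ∈ Submodule.span ℝ (Set.range (fun i => toE (v i)))) :
    ∃ c : ι → ℝ, vinner x x = ∑ i, c i ^ 2 ∧ vinner x (M *ᵥ x) = ∑ i, lam i * c i ^ 2 := by
  obtain ⟨c, hc⟩ := (Submodule.mem_span_range_iff_exists_fun ℝ).mp hx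
  refine ⟨c, ?_, ?_⟩
  · rw [vinner_eq_inner, ← hc, sum_inner]
    apply Finset.sum_congr rfl
    intro i _
    rw [real_inner_smul_left, hv.inner_right_fintype c i, sq]
  · have hMx : toE (M *ᵥ x) = ∑ i, (lam i * c i) • toE (v i) := by
      have hxeq : x = ∑ i, c i • v i := by
        have := congrArg (WithLp.linearEquiv 2 ℝ (Fin k → ℝ)) hc
        rw [map_sum] at this
        simpa [toE] using this.symm
      have : M *ᵥ x = ∑ i, c i • (M *ᵥ v i) := by
        rw [hxeq]
        rw [show M *ᵥ (∑ i, c i • v i) = M.mulVecLin (∑ i, c i • v i) from rfl, map_sum]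
        apply Finset.sum_congr rfl
        intro i _
        rw [_root_.map_smul, Matrix.mulVecLin_apply]
      rw [this]
      have : ∑ i, c i • (M *ᵥ v i) = ∑ i, (lam i * c i) • v i := by
        apply Finset.sum_congr rfl
        intro i _
        rw [hl i, smul_smul, mul_comm]
      rw [this]
      exact (map_sum (WithLp.linearEquiv 2 ℝ (Fin k → ℝ)).symm _ _).symm ▸ rfl
    rw [vinner_eq_inner, ← hc, hMx, sum_inner]
    apply Finset.sum_congr rfl
    intro i _
    rw [real_inner_smul_left, hv.inner_right_fintype (fun i => lam i * c i) i]
    ring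

/-- A generic Courant–Fischer style bound. -/
lemma svals_le_add {m n : ℕ} (A B : Mat m n) (s : Fin n) :
    svals B s ≤ svals A s + fnorm (B - A) := by
  have hMA := Matrix.isHermitian_transpose_mul_self A
  have hMB := Matrix.isHermitian_transpose_mul_self B
  -- index families
  have hs := s.isLt
  set f1 : Fin (n - (s : ℕ)) → Fin n := fun j => ⟨(s : ℕ) + (j : ℕ), by omega⟩ with hf1
  set f2 : Fin ((s : ℕ) + 1) → Fin n := fun j => ⟨(j : ℕ), by omega⟩ with hf2
  have hf1inj : Function.Injective f1 := by
    intro a b hab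
    have h' : (f1 a).val = (f1 b).val := congrArg Fin.val hab
    simp only [hf1] at h'
    exact Fin.ext (by omega)
  have hf2inj : Function.Injective f2 := by
    intro a b hab
    have h' : (f2 a).val = (f2 b).val := congrArg Fin.val hab
    simp only [hf2] at h'
    exact Fin.ext h' 
  set vA : Fin (n - (s : ℕ)) → Fin n → ℝ := fun j => svec hMA (f1 j) with hvA
  set vB : Fin ((s : ℕ) + 1) → Fin n → ℝ := fun j => svec hMB (f2 j) with hvB
  have hvAon : Orthonormal ℝ (fun j => toE (vA j)) := (svec_orthonormal hMA).comp f1 hf1inj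
  have hvBon : Orthonormal ℝ (fun j => toE (vB j)) := (svec_orthonormal hMB).comp f2 hf2inj
  set SA := Submodule.span ℝ (Set.range (fun j => toE (vA j))) with hSA
  set SB := Submodule.span ℝ (Set.range (fun j => toE (vB j))) with hSB
  have hrA : Module.finrank ℝ SA = n - (s : ℕ) := by
    rw [hSA, finrank_span_eq_card hvAon.linearIndependent, Fintype.card_fin]
  have hrB : Module.finrank ℝ SB = (s : ℕ) + 1 := by
    rw [hSB, finrank_span_eq_card hvBon.linearIndependent, Fintype.card_fin]
  -- nontrivial intersection
  have hinter : ∃ x : EuclideanSpace ℝ (Fin n), x ∈ SA ⊓ SB ∧ x ≠ 0 := by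
    by_contra hcon
    push_neg at hcon
    have hbot : SA ⊓ SB = ⊥ := by
      by_contra hne
      obtain ⟨x, hx, hx0⟩ := (Submodule.ne_bot_iff _).mp hne
      exact hx0 (hcon x hx)
    have h1 := Submodule.finrank_sup_add_finrank_inf_eq SA SB
    have h2 : Module.finrank ℝ ↥(SA ⊔ SB) ≤ n := by
      have := Submodule.finrank_le (SA ⊔ SB)
      rwa [finrank_euclideanSpace_fin] at this
    rw [hbot, hrA, hrB] at h1
    have h3 : Module.finrank ℝ (⊥ : Submodule ℝ (EuclideanSpace ℝ (Fin n))) = 0 :=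
      finrank_bot ℝ _
    omega
  obtain ⟨x, ⟨hxA, hxB⟩, hx0⟩ := hinter
  set xf : Fin n → ℝ := x.ofLp with hxf
  have hx0' : xf ≠ 0 := fun h => hx0 (by simpa [hxf] using congrArg (WithLp.toLp 2) h)
  -- quadratic form bounds
  obtain ⟨cA, hcA1, hcA2⟩ := span_quadform (Aᵀ * A) vA hvAon (fun j => eigs _ hMA (f1 j))
    (fun j => mulVec_svec hMA (f1 j)) xf hxA
  obtain ⟨cB, hcB1, hcB2⟩ := span_quadform (Bᵀ * B) vB hvBon (fun j => eigs _ hMB (f2 j))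
    (fun j => mulVec_svec hMB (f2 j)) xf hxB
  have hquadA : vinner xf ((Aᵀ * A) *ᵥ xf) ≤ eigs _ hMA s * vinner xf xf := by
    rw [hcA2, hcA1, Finset.mul_sum]
    apply Finset.sum_le_sum
    intro j _
    apply mul_le_mul_of_nonneg_right _ (sq_nonneg _)
    apply eigs_antitone hMA
    show (s : ℕ) ≤ (s : ℕ) + (j : ℕ)
    omega
  have hquadB : eigs _ hMB s * vinner xf xf ≤ vinner xf ((Bᵀ * B) *ᵥ xf) := by
    rw [hcB2, hcB1, Finset.mul_sum]
    apply Finset.sum_le_sum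
    intro j _
    apply mul_le_mul_of_nonneg_right _ (sq_nonneg _)
    apply eigs_antitone hMB
    show (j : ℕ) ≤ (s : ℕ)
    omega
  -- rewrite quadratic forms as norms of images
  have hquad_eq : ∀ (M : Mat m n) (y : Fin n → ℝ),
      vinner y ((Mᵀ * M) *ᵥ y) = vinner (M *ᵥ y) (M *ᵥ y) := by
    intro M y
    unfold vinner
    rw [show (Mᵀ * M) *ᵥ y = Mᵀ *ᵥ (M *ᵥ y) from (Matrix.mulVec_mulVec y Mᵀ M).symm]
    have h1 : ∑ i, y i * (Mᵀ *ᵥ (M *ᵥ y)) i = y ⬝ᵥ (Mᵀ *ᵥ (M *ᵥ y)) := rfl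
    have h2 : ∑ i, (M *ᵥ y) i * (M *ᵥ y) i = (M *ᵥ y) ⬝ᵥ (M *ᵥ y) := rfl
    rw [h1, h2, Matrix.dotProduct_mulVec, Matrix.vecMul_transpose]
  set cx := vinner xf xf with hcx
  have hcxpos : 0 < cx := vinner_self_pos xf hx0'
  have key1 : svals B s * Real.sqrt cx ≤ vnorm (B *ᵥ xf) := by
    have h1 : eigs _ hMB s * cx ≤ vinner (B *ᵥ xf) (B *ᵥ xf) := by
      rw [← hquad_eq]; exact hquadB
    have h2 : Real.sqrt (eigs _ hMB s * cx) ≤ vnorm (B *ᵥ xf) := Real.sqrt_le_sqrt h1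
    calc svals B s * Real.sqrt cx = Real.sqrt (eigs _ hMB s) * Real.sqrt cx := rfl
      _ = Real.sqrt (eigs _ hMB s * cx) := sqrt_mul_sqrt _ _ hcxpos.le
      _ ≤ vnorm (B *ᵥ xf) := h2
  have key2 : vnorm (A *ᵥ xf) ≤ svals A s * Real.sqrt cx := by
    have h1 : vinner (A *ᵥ xf) (A *ᵥ xf) ≤ eigs _ hMA s * cx := by
      rw [← hquad_eq]; exact hquadA
    calc vnorm (A *ᵥ xf) ≤ Real.sqrt (eigs _ hMA s * cx) := Real.sqrt_le_sqrt h1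
      _ = svals A s * Real.sqrt cx := (sqrt_mul_sqrt _ _ hcxpos.le).symm
  have key3 : vnorm (B *ᵥ xf) ≤ vnorm (A *ᵥ xf) + fnorm (B - A) * Real.sqrt cx := by
    have hsplit : B *ᵥ xf = A *ᵥ xf + (B - A) *ᵥ xf := by
      rw [Matrix.sub_mulVec]; abel
    calc vnorm (B *ᵥ xf) = vnorm (A *ᵥ xf + (B - A) *ᵥ xf) := by rw [← hsplit]
      _ ≤ vnorm (A *ᵥ xf) + vnorm ((B - A) *ᵥ xf) := vnorm_add_le _ _
      _ ≤ vnorm (A *ᵥ xf) + fnorm (B - A) * vnorm xf := by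
          have := vnorm_mulVec_le (B - A) xf
          linarith
      _ = vnorm (A *ᵥ xf) + fnorm (B - A) * Real.sqrt cx := rfl
  have hsq : 0 < Real.sqrt cx := Real.sqrt_pos.mpr hcxpos
  have : svals B s * Real.sqrt cx ≤ (svals A s + fnorm (B - A)) * Real.sqrt cx := by
    calc svals B s * Real.sqrt cx ≤ vnorm (B *ᵥ xf) := key1
      _ ≤ vnorm (A *ᵥ xf) + fnorm (B - A) * Real.sqrt cx := key3
      _ ≤ svals A s * Real.sqrt cx + fnorm (B - A) * Real.sqrt cx := by linarith
      _ = (svals A s + fnorm (B - A)) * Real.sqrt cx := by ring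
  exact le_of_mul_le_mul_right this hsq

/-- Mirsky/Weyl Lipschitz bound for ordered singular values. -/
lemma abs_svals_sub_le {m n : ℕ} (A B : Mat m n) (s : Fin n) :
    |svals A s - svals B s| ≤ fnorm (A - B) := by
  rw [abs_le]
  constructor
  · have := svals_le_add A B s
    rw [fnorm_sub_comm] at this
    linarith
  · have := svals_le_add B A s
    linarith

end Aux
namespace Aux
open Paper

lemma vinner_smul_smul {n : ℕ} (c d : ℝ) (x y : Fin n → ℝ) :
    vinner (c • x) (d • y) = c * d * vinner x y := by
  unfold vinner
  rw [Finset.mul_sum]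
  apply Finset.sum_congr rfl
  intro i _
  simp [Pi.smul_apply, smul_eq_mul]
  ring

lemma vinner_self_eq_zero {n : ℕ} {x : Fin n → ℝ} (h : vinner x x = 0) : x = 0 := by
  by_contra hx
  exact absurd h (vinner_self_pos x hx).ne'

/-- Orthogonality relations for images `A vⱼ` of sorted eigenvectors of `AᵀA`. -/
lemma vinner_mulVec_svec {m n : ℕ} (A : Mat m n) (i j : Fin n) :
    vinner (A *ᵥ svec (Matrix.isHermitian_transpose_mul_self A) i)
           (A *ᵥ svec (Matrix.isHermitian_transpose_mul_self A) j) =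
      eigs _ (Matrix.isHermitian_transpose_mul_self A) j * (if i = j then 1 else 0) := by
  set hM := Matrix.isHermitian_transpose_mul_self A
  set w := svec hM
  have h1 : w i ⬝ᵥ ((Aᵀ * A) *ᵥ w j) = (A *ᵥ w i) ⬝ᵥ (A *ᵥ w j) := by
    rw [← Matrix.mulVec_mulVec, Matrix.dotProduct_mulVec, Matrix.vecMul_transpose]
  have h2 : vinner (A *ᵥ w i) (A *ᵥ w j) = w i ⬝ᵥ ((Aᵀ * A) *ᵥ w j) := h1.symm
  rw [h2, mulVec_svec hM j, dotProduct_smul]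
  have h3 : w i ⬝ᵥ w j = vinner (w i) (w j) := rfl
  have h4 : vinner (w i) (w j) = (if i = j then 1 else 0) := by
    rw [vinner_eq_inner]
    exact orthonormal_iff_ite.mp (svec_orthonormal hM) i j
  rw [smul_eq_mul, h3, h4]

lemma eigs_tmul_nonneg {m n : ℕ} (A : Mat m n) (j : Fin n) :
    0 ≤ eigs _ (Matrix.isHermitian_transpose_mul_self A) j := by
  have hAeq : Aᴴ = Aᵀ := by
    ext i j; simp [Matrix.conjTranspose_apply]
  have hpsd : (Aᵀ * A).PosSemidef := by
    rw [← hAeq]; exact Matrix.posSemidef_conjTranspose_mul_self A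
  exact hpsd.eigenvalues_nonneg _

lemma sq_svals {m n : ℕ} (A : Mat m n) (j : Fin n) :
    svals A j ^ 2 = eigs _ (Matrix.isHermitian_transpose_mul_self A) j :=
  Real.sq_sqrt (eigs_tmul_nonneg A j)

/-- Existence of an ordered singular value decomposition. -/
lemma exists_svd {m n : ℕ} (hmn : n ≤ m) (A : Mat m n) :
    ∃ (U : Matrix (Fin m) (Fin m) ℝ) (V : Matrix (Fin n) (Fin n) ℝ),
      Uᵀ * U = 1 ∧ Vᵀ * V = 1 ∧ A = U * mdiag (m := m) (svals A) * Vᵀ := by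
  set hM := Matrix.isHermitian_transpose_mul_self A with hhM
  set w := svec hM with hw
  set σ := svals A with hσ
  -- the left orthonormal family
  set sset : Set (Fin m) := {i | ∃ h : (i : ℕ) < n, σ ⟨(i : ℕ), h⟩ ≠ 0} with hsset
  set vv : Fin m → EuclideanSpace ℝ (Fin m) := fun i =>
    if h : (i : ℕ) < n then toE ((σ ⟨(i : ℕ), h⟩)⁻¹ • (A *ᵥ w ⟨(i : ℕ), h⟩)) else 0 with hvv
  have hON : Orthonormal ℝ (sset.restrict vv) := by
    rw [orthonormal_iff_ite]
    rintro ⟨i, hlt_i, hne_i⟩ ⟨j, hlt_j, hne_j⟩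
    have hvvi : vv i = toE ((σ ⟨(i : ℕ), hlt_i⟩)⁻¹ • (A *ᵥ w ⟨(i : ℕ), hlt_i⟩)) := dif_pos hlt_i
    have hvvj : vv j = toE ((σ ⟨(j : ℕ), hlt_j⟩)⁻¹ • (A *ᵥ w ⟨(j : ℕ), hlt_j⟩)) := dif_pos hlt_j
    show (inner ℝ (vv i) (vv j) : ℝ) = _
    rw [hvvi, hvvj, ← vinner_eq_inner, vinner_smul_smul, vinner_mulVec_svec]
    by_cases hij : i = j
    · subst hij
      simp only [if_pos rfl, if_pos (show (⟨(i:ℕ), hlt_i⟩ : Fin n) = ⟨(i:ℕ), hlt_i⟩ from rfl)]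
      have hμ : eigs _ hM ⟨(i:ℕ), hlt_i⟩ = σ ⟨(i:ℕ), hlt_i⟩ ^ 2 := (sq_svals A _).symm
      rw [hμ]
      field_simp
    · have hne' : (⟨(i:ℕ), hlt_i⟩ : Fin n) ≠ ⟨(j:ℕ), hlt_j⟩ := by
        intro h
        have hv := congrArg Fin.val h
        exact hij (Fin.ext hv)
      have hij' : (⟨i, hlt_i, hne_i⟩ : sset) ≠ ⟨j, hlt_j, hne_j⟩ := by
        intro h
        exact hij (congrArg Subtype.val h)
      rw [if_neg hne', if_neg hij']
      ring
  have hcard : Module.finrank ℝ (EuclideanSpace ℝ (Fin m)) = Fintype.card (Fin m) := by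
    rw [finrank_euclideanSpace_fin, Fintype.card_fin]
  obtain ⟨b, hb⟩ := hON.exists_orthonormalBasis_extension_of_card_eq hcard
  set U : Matrix (Fin m) (Fin m) ℝ := fun k i => b i k with hU
  set V : Matrix (Fin n) (Fin n) ℝ := fun l j => w j l with hV
  have hUorth : Uᵀ * U = 1 := by
    ext i i'
    rw [Matrix.mul_apply, Matrix.one_apply]
    have : ∑ k, Uᵀ i k * U k i' = vinner (fun k => b i k) (fun k => b i' k) := by
      apply Finset.sum_congr rfl; intro k _; rfl
    rw [this, vinner_eq_inner]
    exact orthonormal_iff_ite.mp b.orthonormal i i'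
  have hVorth : Vᵀ * V = 1 := by
    ext j j'
    rw [Matrix.mul_apply, Matrix.one_apply]
    have : ∑ l, Vᵀ j l * V l j' = vinner (w j) (w j') := by
      apply Finset.sum_congr rfl; intro l _; rfl
    rw [this, vinner_eq_inner]
    exact orthonormal_iff_ite.mp (svec_orthonormal hM) j j'
  refine ⟨U, V, hUorth, hVorth, ?_⟩
  have hAV : A * V = U * (mdiag σ : Mat m n) := by
    ext k j
    have hLHS : (A * V) k j = (A *ᵥ w j) k := by
      rw [Matrix.mul_apply]
      simp [Matrix.mulVec, dotProduct, hV]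
    have hRHS : (U * (mdiag σ : Mat m n)) k j = b (Fin.castLE hmn j) k * σ j := by
      rw [Matrix.mul_apply]
      rw [Finset.sum_eq_single (Fin.castLE hmn j)]
      · show U k (Fin.castLE hmn j) * (mdiag σ : Mat m n) (Fin.castLE hmn j) j = _
        unfold mdiag
        rw [if_pos (show ((Fin.castLE hmn j : Fin m) : ℕ) = (j : ℕ) from rfl)]
      · intro i _ hineq
        have hij' : ¬ ((i : ℕ) = (j : ℕ)) := by
          intro h
          exact hineq (Fin.ext h)
        show U k i * (mdiag σ : Mat m n) i j = 0
        unfold mdiag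
        rw [if_neg hij', mul_zero]
      all_goals try (intro h; exact absurd (Finset.mem_univ _) h)
    rw [hLHS, hRHS]
    have hjlt : ((Fin.castLE hmn j : Fin m) : ℕ) < n := j.isLt
    have hjeq : (⟨((Fin.castLE hmn j : Fin m) : ℕ), hjlt⟩ : Fin n) = j := Fin.ext rfl
    by_cases hσj : σ j = 0
    · -- A *ᵥ w j = 0
      have hμ0 : eigs _ hM j = 0 := by
        have := sq_svals A j
        rw [← hσ] at this
        rw [← this, hσj]
        ring
      have hAw : A *ᵥ w j = 0 := by
        apply vinner_self_eq_zero
        have := vinner_mulVec_svec A j j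
        rw [if_pos rfl, mul_one] at this
        rw [hw] at *
        rw [this, hμ0]
      rw [hAw, hσj]
      simp
    · -- b agrees with vv there
      have hmem : (Fin.castLE hmn j : Fin m) ∈ sset := by
        refine ⟨hjlt, ?_⟩
        rw [hjeq]
        exact hσj
      have hbv : b (Fin.castLE hmn j) = vv (Fin.castLE hmn j) := hb _ hmem
      have hvvval : vv (Fin.castLE hmn j) = toE ((σ j)⁻¹ • (A *ᵥ w j)) := by
        simp only [hvv]
        rw [dif_pos hjlt, hjeq]
      rw [hbv, hvvval]
      show (A *ᵥ w j) k = ((σ j)⁻¹ • (A *ᵥ w j)) k * σ j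
      rw [Pi.smul_apply, smul_eq_mul]
      field_simp
  have hVVt : V * Vᵀ = 1 := mul_eq_one_comm.mp hVorth
  calc A = A * (V * Vᵀ) := by rw [hVVt, Matrix.mul_one]
    _ = (A * V) * Vᵀ := by rw [Matrix.mul_assoc]
    _ = U * (mdiag σ : Mat m n) * Vᵀ := by rw [hAV]

lemma mdiag_sub {m n : ℕ} (y z : Fin n → ℝ) :
    (mdiag (y - z) : Mat m n) = mdiag y - mdiag z := by
  ext i j
  rw [Matrix.sub_apply]
  unfold mdiag
  by_cases h : (i : ℕ) = (j : ℕ) <;> simp [h]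

lemma tmul_conj {m n : ℕ} (hmn : n ≤ m) {U : Matrix (Fin m) (Fin m) ℝ}
    {V : Matrix (Fin n) (Fin n) ℝ} (hU : Uᵀ * U = 1) (hV : Vᵀ * V = 1) (y : Fin n → ℝ) :
    (U * (mdiag y : Mat m n) * Vᵀ)ᵀ * (U * (mdiag y : Mat m n) * Vᵀ) =
      V * Matrix.diagonal (fun j => y j ^ 2) * Vᵀ := by
  have hdd : (mdiag y : Mat m n)ᵀ * (mdiag y : Mat m n) = Matrix.diagonal (fun j => y j ^ 2) := by
    ext j j'
    rw [Matrix.mul_apply]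
    by_cases h : j = j'
    · subst h
      rw [Matrix.diagonal_apply_eq]
      rw [Finset.sum_eq_single (Fin.castLE hmn j)]
      · show (mdiag y : Mat m n)ᵀ j (Fin.castLE hmn j) * (mdiag y : Mat m n) (Fin.castLE hmn j) j = _
        rw [Matrix.transpose_apply]
        unfold mdiag
        rw [if_pos (show ((Fin.castLE hmn j : Fin m) : ℕ) = (j : ℕ) from rfl)]
        ring
      · intro i _ hineq
        have hcond : ¬ ((i : ℕ) = (j : ℕ)) := fun h => hineq (Fin.ext h)
        show (mdiag y : Mat m n)ᵀ j i * (mdiag y : Mat m n) i j = 0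
        rw [Matrix.transpose_apply]
        unfold mdiag
        rw [if_neg hcond, zero_mul]
      · intro h; exact absurd (Finset.mem_univ _) h
    · rw [Matrix.diagonal_apply_ne _ h]
      apply Finset.sum_eq_zero
      intro i _
      show (mdiag y : Mat m n)ᵀ j i * (mdiag y : Mat m n) i j' = 0
      rw [Matrix.transpose_apply]
      unfold mdiag
      by_cases h1 : (i : ℕ) = (j : ℕ)
      · have h2 : ¬ ((i : ℕ) = (j' : ℕ)) := by
          intro h2
          exact h (Fin.ext (h1.symm.trans h2))
        rw [if_neg h2, mul_zero]
      · rw [if_neg h1, zero_mul]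
  have h1 : (U * (mdiag y : Mat m n) * Vᵀ)ᵀ = V * (mdiag y : Mat m n)ᵀ * Uᵀ := by
    rw [Matrix.transpose_mul, Matrix.transpose_mul, Matrix.transpose_transpose, Matrix.mul_assoc]
  rw [h1]
  have h2 : V * (mdiag y : Mat m n)ᵀ * Uᵀ * (U * (mdiag y : Mat m n) * Vᵀ) =
      V * ((mdiag y : Mat m n)ᵀ * (mdiag y : Mat m n)) * Vᵀ := by
    simp only [Matrix.mul_assoc]
    rw [← Matrix.mul_assoc Uᵀ U ((mdiag y : Mat m n) * Vᵀ), hU, Matrix.one_mul]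
  rw [h2, hdd]

/-- Singular values of `U * mdiag y * Vᵀ`. -/
lemma svals_conj {m n : ℕ} (hmn : n ≤ m) {U : Matrix (Fin m) (Fin m) ℝ}
    {V : Matrix (Fin n) (Fin n) ℝ} (hU : Uᵀ * U = 1) (hV : Vᵀ * V = 1) (y : Fin n → ℝ) :
    svals (U * (mdiag y : Mat m n) * Vᵀ) = sortDesc (fun i => |y i|) := by
  set B := U * (mdiag y : Mat m n) * Vᵀ with hB
  have hdecomp : Bᵀ * B = V * Matrix.diagonal (fun j => y j ^ 2) * Vᵀ := tmul_conj hmn hU hV y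
  have heigs : eigs _ (Matrix.isHermitian_transpose_mul_self B) = sortDesc (fun j => y j ^ 2) :=
    eigs_conj_diagonal _ hV hdecomp
  have hsv : svals B = fun i => Real.sqrt (sortDesc (fun j => y j ^ 2) i) := by
    funext i
    show Real.sqrt (eigs _ (Matrix.isHermitian_transpose_mul_self B) i) = _
    rw [heigs]
  rw [hsv]
  apply antitone_eq_of_mlt_eq
  · intro i j hij
    exact Real.sqrt_le_sqrt (sortDesc_antitone _ hij)
  · exact sortDesc_antitone _
  · have e1 : (fun i => Real.sqrt (sortDesc (fun j => y j ^ 2) i)) =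
        Real.sqrt ∘ (sortDesc (fun j => y j ^ 2)) := rfl
    rw [e1, mlt_comp, mlt_sortDesc, ← mlt_comp, mlt_sortDesc]
    congr 1
    funext i
    exact Real.sqrt_sq_eq_abs (y i)

/-- `sortDesc |y|` is a signed permutation of `y`. -/
lemma sortDesc_abs_signedPerm {n : ℕ} (y : Fin n → ℝ) :
    ∃ Q : Matrix (Fin n) (Fin n) ℝ, IsSignedPerm Q ∧
      sortDesc (fun i => |y i|) = Q.mulVec y := by
  set e := Tuple.sort (fun j => -(|y j|)) with he
  set sg : Fin n → ℝ := fun i => if y (e i) < 0 then -1 else 1 with hsg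
  refine ⟨fun i j => if j = e i then sg i else 0, ⟨e, sg, fun i => ?_, fun i j => rfl⟩, ?_⟩
  · by_cases h : y (e i) < 0 <;> simp [hsg, h]
  · funext i
    have h1 : Matrix.mulVec (fun i j => if j = e i then sg i else 0) y i = sg i * y (e i) := by
      unfold Matrix.mulVec dotProduct
      rw [Finset.sum_eq_single (e i)]
      · simp
      · intro j _ hj; simp [hj]
      · intro h; exact absurd (Finset.mem_univ _) h
    rw [h1]
    show |y (e i)| = sg i * y (e i)
    by_cases h : y (e i) < 0
    · rw [hsg]; simp only [if_pos h]; rw [abs_of_neg h]; ring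
    · rw [hsg]; simp only [if_neg h]; rw [abs_of_nonneg (not_lt.mp h)]; ring

/-- Key approximation: a matrix with prescribed (sorted-absolute) singular values
at controlled distance from `A`. -/
lemma approx_matrix {m n : ℕ} (hmn : n ≤ m) (A : Mat m n) (y : Fin n → ℝ) :
    ∃ B : Mat m n, svals B = sortDesc (fun i => |y i|) ∧
      fnorm (B - A) = vnorm (y - svals A) := by
  obtain ⟨U, V, hU, hV, hA⟩ := exists_svd hmn A
  refine ⟨U * (mdiag y : Mat m n) * Vᵀ, svals_conj hmn hU hV y, ?_⟩
  have h1 : U * (mdiag y : Mat m n) * Vᵀ - A = U * (mdiag (y - svals A) : Mat m n) * Vᵀ := by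
    rw [mdiag_sub, Matrix.mul_sub, Matrix.sub_mul, ← hA]
  rw [h1, fnorm_conj hU hV, fnorm_mdiag hmn]

end Aux
namespace Aux
open Paper Filter Topology

/-! ### Flattening and more norm facts -/

def toE2 {m n : ℕ} (A : Mat m n) : EuclideanSpace ℝ (Fin m × Fin n) :=
  WithLp.toLp 2 (fun p => A p.1 p.2)

lemma fnorm_eq_norm {m n : ℕ} (A : Mat m n) : fnorm A = ‖toE2 A‖ := by
  rw [EuclideanSpace.norm_eq]
  unfold fnorm finner
  congr 1
  rw [Fintype.sum_prod_type]
  apply Finset.sum_congr rfl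
  intro i _
  apply Finset.sum_congr rfl
  intro j _
  simp [toE2, Real.norm_eq_abs, sq_abs, sq]

lemma fnorm_add_le {m n : ℕ} (A B : Mat m n) : fnorm (A + B) ≤ fnorm A + fnorm B := by
  rw [fnorm_eq_norm, fnorm_eq_norm, fnorm_eq_norm]
  exact norm_add_le (toE2 A) (toE2 B)

lemma fnorm_smul {m n : ℕ} (c : ℝ) (A : Mat m n) : fnorm (c • A) = |c| * fnorm A := by
  rw [fnorm_eq_norm, fnorm_eq_norm]
  have : toE2 (c • A) = c • toE2 A := rfl
  rw [this, norm_smul, Real.norm_eq_abs]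

lemma fnorm_zero {m n : ℕ} : fnorm (0 : Mat m n) = 0 := by
  simp [fnorm, finner]

lemma vnorm_smul_vec {n : ℕ} (c : ℝ) (x : Fin n → ℝ) : vnorm (c • x) = |c| * vnorm x :=
  vnorm_smul c x

lemma continuous_vnorm {n : ℕ} : Continuous (vnorm : (Fin n → ℝ) → ℝ) := by
  apply Real.continuous_sqrt.comp
  unfold vinner
  exact continuous_finset_sum _ fun i _ => (continuous_apply i).mul (continuous_apply i)

lemma continuous_fnorm {m n : ℕ} : Continuous (fnorm : Mat m n → ℝ) := by
  apply Real.continuous_sqrt.comp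
  unfold finner
  apply continuous_finset_sum
  intro i _
  apply continuous_finset_sum
  intro j _
  have hc : Continuous (fun A : Mat m n => A i j) :=
    (continuous_apply j).comp (continuous_apply i)
  exact hc.mul hc

/-! ### Limit plumbing -/

lemma tendsto_seq_nhdsGT {t : ℕ → ℝ} (h0 : ∀ k, 0 < t k) (hlim : Tendsto t atTop (𝓝 0)) :
    Tendsto t atTop (𝓝[>] (0 : ℝ)) := by
  rw [tendsto_nhdsWithin_iff]
  exact ⟨hlim, Eventually.of_forall h0⟩

lemma tendsto_of_fnorm_le {m n : ℕ} {α : Type*} {l : Filter α} {F : α → Mat m n} {c : Mat m n}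
    {g : α → ℝ} (hg : Tendsto g l (𝓝 0)) (hb : ∀ᶠ a in l, fnorm (F a - c) ≤ g a) :
    Tendsto F l (𝓝 c) := by
  refine tendsto_pi_nhds.mpr ?_
  intro i
  rw [tendsto_pi_nhds]
  intro j
  rw [← tendsto_sub_nhds_zero_iff]
  apply squeeze_zero_norm' _ hg
  filter_upwards [hb] with a ha
  calc ‖F a i j - c i j‖ = |(F a - c) i j| := by rfl
    _ ≤ fnorm (F a - c) := abs_le_fnorm _ i j
    _ ≤ g a := ha

lemma tendsto_vnorm_sub {n : ℕ} {α : Type*} {l : Filter α} {r q : α → Fin n → ℝ}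
    {a b : Fin n → ℝ} (hr : Tendsto r l (𝓝 a)) (hq : Tendsto q l (𝓝 b)) :
    Tendsto (fun x => vnorm (r x - q x)) l (𝓝 (vnorm (a - b))) :=
  (continuous_vnorm.tendsto _).comp (hr.sub hq)

lemma tendsto_fnorm_sub {m n : ℕ} {α : Type*} {l : Filter α} {r q : α → Mat m n}
    {a b : Mat m n} (hr : Tendsto r l (𝓝 a)) (hq : Tendsto q l (𝓝 b)) :
    Tendsto (fun x => fnorm (r x - q x)) l (𝓝 (fnorm (a - b))) :=
  (continuous_fnorm.tendsto _).comp (hr.sub hq)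

lemma sub_self_vnorm_zero {n : ℕ} (a : Fin n → ℝ) : vnorm (a - a) = 0 := by
  rw [sub_self]; exact vnorm_zero

/-- Scalar expansion of singular values along a parabolic quotient. -/
lemma svals_expand {m n : ℕ} (X C : Mat m n) (dsH : Fin n → ℝ) {t : ℝ} (ht : t ≠ 0) :
    svals X + t • dsH + (t ^ 2 / 2) •
      ((fun s => (svals C s - svals X s - t * dsH s) / (t ^ 2 / 2)) : Fin n → ℝ) = svals C := by
  funext s
  have ht2 : t ^ 2 / 2 ≠ 0 := by positivity
  simp only [Pi.add_apply, Pi.smul_apply, smul_eq_mul]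
  field_simp
  ring

end Aux
namespace Aux
open Paper Filter Topology

/-- The second-order parabolic difference quotient of the singular value map. -/
def pquot {m n : ℕ} (X : Mat m n) (dsH : Fin n → ℝ) (H W : Mat m n) (t : ℝ) : Fin n → ℝ :=
  fun s => (svals (X + t • H + (t ^ 2 / 2) • W) s - svals X s - t * dsH s) / (t ^ 2 / 2)

lemma pquot_expand {m n : ℕ} (X : Mat m n) (dsH : Fin n → ℝ) (H W : Mat m n) {t : ℝ}
    (ht : t ≠ 0) :
    svals X + t • dsH + (t ^ 2 / 2) • pquot X dsH H W t =
      svals (X + t • H + (t ^ 2 / 2) • W) :=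
  svals_expand X _ dsH ht

section Main

variable {m n : ℕ} (hmn : n ≤ m) (Δ : Set (Fin n → ℝ)) (hΔ : AbsSymSet Δ)
  (X : Mat m n) (ds : Mat m n → Fin n → ℝ) (dds : Mat m n → Mat m n → Fin n → ℝ)
  (H : Mat m n)

lemma pquot_tendsto
    (hdds : ∀ W s, Tendsto (fun t : ℝ =>
        (svals (X + t • H + (t ^ 2 / 2) • W) s - svals X s - t * ds H s) / (t ^ 2 / 2))
      (𝓝[>] (0 : ℝ)) (𝓝 (dds H W s))) (W : Mat m n) :
    Tendsto (fun t => pquot X (ds H) H W t) (𝓝[>] (0 : ℝ)) (𝓝 (dds H W)) :=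
  tendsto_pi_nhds.mpr (fun s => hdds W s)

/-- Forward inclusion: `T²_Γ(X,H) ⊆ {W : σ''(X;H,W) ∈ T²_Δ}`. -/
lemma forward_incl
    (hdds : ∀ W s, Tendsto (fun t : ℝ =>
        (svals (X + t • H + (t ^ 2 / 2) • W) s - svals X s - t * ds H s) / (t ^ 2 / 2))
      (𝓝[>] (0 : ℝ)) (𝓝 (dds H W s)))
    (W : Mat m n) (hW : W ∈ tangentCone2Of {Y : Mat m n | svals Y ∈ Δ} X H) :
    dds H W ∈ tangentCone2Of Δ (svals X) (ds H) := by
  obtain ⟨t, W', ht0, htlim, hWlim, hmem⟩ := hW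
  have hseq : Tendsto t atTop (𝓝[>] (0 : ℝ)) := tendsto_seq_nhdsGT ht0 htlim
  refine ⟨t, fun k => pquot X (ds H) H (W' k) (t k), ht0, htlim, ?_, ?_⟩
  · rw [tendsto_pi_nhds]
    intro s
    have hqs : Tendsto (fun k => pquot X (ds H) H W (t k) s) atTop (𝓝 (dds H W s)) :=
      (hdds W s).comp hseq
    have hfW : Tendsto (fun k => fnorm (W' k - W)) atTop (𝓝 0) := by
      have := tendsto_fnorm_sub hWlim (tendsto_const_nhds (x := W))
      rwa [sub_self, fnorm_zero] at this
    have hdiff : Tendsto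
        (fun k => pquot X (ds H) H (W' k) (t k) s - pquot X (ds H) H W (t k) s)
        atTop (𝓝 0) := by
      apply squeeze_zero_norm' _ hfW
      filter_upwards with k
      have htk := ht0 k
      have htk2 : (0 : ℝ) < t k ^ 2 / 2 := by positivity
      have hC : (X + t k • H + (t k ^ 2 / 2) • W' k) - (X + t k • H + (t k ^ 2 / 2) • W) =
          (t k ^ 2 / 2) • (W' k - W) := by
        rw [smul_sub]; abel
      have hlip := abs_svals_sub_le (X + t k • H + (t k ^ 2 / 2) • W' k)
        (X + t k • H + (t k ^ 2 / 2) • W) s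
      rw [hC, fnorm_smul] at hlip
      have habs : |t k ^ 2 / 2| = t k ^ 2 / 2 := abs_of_pos htk2
      rw [habs] at hlip
      have hre : pquot X (ds H) H (W' k) (t k) s - pquot X (ds H) H W (t k) s =
          (svals (X + t k • H + (t k ^ 2 / 2) • W' k) s -
            svals (X + t k • H + (t k ^ 2 / 2) • W) s) / (t k ^ 2 / 2) := by
        unfold pquot
        field_simp
        ring
      rw [Real.norm_eq_abs, hre, abs_div, abs_of_pos htk2, div_le_iff₀ htk2]
      calc |svals (X + t k • H + (t k ^ 2 / 2) • W' k) s -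
            svals (X + t k • H + (t k ^ 2 / 2) • W) s| ≤ t k ^ 2 / 2 * fnorm (W' k - W) := hlip
        _ = fnorm (W' k - W) * (t k ^ 2 / 2) := by ring
    have := hqs.add hdiff
    rw [add_zero] at this
    apply this.congr
    intro k
    ring
  · intro k
    rw [pquot_expand X (ds H) H (W' k) (ne_of_gt (ht0 k))]
    exact hmem k

/-- Backward inclusion. -/
lemma backward_incl (hmn : n ≤ m) (hΔ : AbsSymSet Δ)
    (hdds : ∀ W s, Tendsto (fun t : ℝ =>
        (svals (X + t • H + (t ^ 2 / 2) • W) s - svals X s - t * ds H s) / (t ^ 2 / 2))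
      (𝓝[>] (0 : ℝ)) (𝓝 (dds H W s)))
    (W : Mat m n) (hW : dds H W ∈ tangentCone2Of Δ (svals X) (ds H)) :
    W ∈ tangentCone2Of {Y : Mat m n | svals Y ∈ Δ} X H := by
  obtain ⟨t, u', ht0, htlim, hulim, hmem⟩ := hW
  have hseq : Tendsto t atTop (𝓝[>] (0 : ℝ)) := tendsto_seq_nhdsGT ht0 htlim
  -- the target matrices
  set A : ℕ → Mat m n := fun k => X + t k • H + (t k ^ 2 / 2) • W with hA
  set y : ℕ → Fin n → ℝ := fun k => svals X + t k • ds H + (t k ^ 2 / 2) • u' k with hy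
  have happrox : ∀ k, ∃ B : Mat m n, svals B = sortDesc (fun i => |y k i|) ∧
      fnorm (B - A k) = vnorm (y k - svals (A k)) := fun k => approx_matrix hmn (A k) (y k)
  choose B hBsv hBdist using happrox
  set W' : ℕ → Mat m n := fun k => W + (2 / t k ^ 2) • (B k - A k) with hW'
  have hXW' : ∀ k, X + t k • H + (t k ^ 2 / 2) • W' k = B k := by
    intro k
    have htk := ht0 k
    rw [hW']
    have : (t k ^ 2 / 2) • (W + (2 / t k ^ 2) • (B k - A k)) =
        (t k ^ 2 / 2) • W + ((t k ^ 2 / 2) * (2 / t k ^ 2)) • (B k - A k) := by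
      rw [smul_add, smul_smul]
    rw [this]
    have hcoef : (t k ^ 2 / 2) * (2 / t k ^ 2) = 1 := by
      field_simp
    rw [hcoef, one_smul, ← add_assoc]
    show A k + (B k - A k) = B k
    rw [add_comm, sub_add_cancel]
  have hq : Tendsto (fun k => pquot X (ds H) H W (t k)) atTop (𝓝 (dds H W)) :=
    (pquot_tendsto X ds dds H hdds W).comp hseq
  have hkey : ∀ k, fnorm (W' k - W) = vnorm (u' k - pquot X (ds H) H W (t k)) := by
    intro k
    have htk := ht0 k
    have htk2 : (0 : ℝ) < t k ^ 2 / 2 := by positivity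
    have h1 : W' k - W = (2 / t k ^ 2) • (B k - A k) := by
      rw [hW']
      exact add_sub_cancel_left W _
    have h2 : y k - svals (A k) = (t k ^ 2 / 2) • (u' k - pquot X (ds H) H W (t k)) := by
      have hexp := pquot_expand X (ds H) H W (ne_of_gt htk)
      rw [hy, smul_sub]
      rw [show svals (A k) = svals X + t k • ds H + (t k ^ 2 / 2) • pquot X (ds H) H W (t k) from
        hexp.symm]
      beta_reduce
      abel
    rw [h1, fnorm_smul, hBdist, h2, vnorm_smul]
    rw [abs_of_pos (by positivity : (0:ℝ) < 2 / t k ^ 2), abs_of_pos htk2]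
    rw [← mul_assoc]
    have : 2 / t k ^ 2 * (t k ^ 2 / 2) = 1 := by field_simp
    rw [this, one_mul]
  refine ⟨t, W', ht0, htlim, ?_, ?_⟩
  · apply tendsto_of_fnorm_le (g := fun k => vnorm (u' k - pquot X (ds H) H W (t k)))
    · have := tendsto_vnorm_sub hulim hq
      rwa [sub_self, vnorm_zero] at this
    · filter_upwards with k
      exact (hkey k).le
  · intro k
    show svals (X + t k • H + (t k ^ 2 / 2) • W' k) ∈ Δ
    rw [hXW' k, hBsv k]
    obtain ⟨Q, hQ, hQeq⟩ := sortDesc_abs_signedPerm (y k)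
    rw [hQeq]
    exact hΔ Q hQ (y k) (hmem k)

end Main

end Aux
namespace Aux
open Paper Filter Topology

section Main2

variable {m n : ℕ}

/-- Nonemptiness of the second-order tangent set of `Γ`. -/
lemma nonempty_T2 (hmn : n ≤ m) (Δ : Set (Fin n → ℝ)) (hΔ : AbsSymSet Δ)
    (X : Mat m n) (ds : Mat m n → Fin n → ℝ) (dds : Mat m n → Mat m n → Fin n → ℝ)
    (H : Mat m n)
    (hdds : ∀ W s, Tendsto (fun t : ℝ =>
        (svals (X + t • H + (t ^ 2 / 2) • W) s - svals X s - t * ds H s) / (t ^ 2 / 2))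
      (𝓝[>] (0 : ℝ)) (𝓝 (dds H W s)))
    (hne : (tangentCone2Of Δ (svals X) (ds H)).Nonempty) :
    (tangentCone2Of {Y : Mat m n | svals Y ∈ Δ} X H).Nonempty := by
  obtain ⟨u, t, u', ht0, htlim, hulim, hmem⟩ := hne
  have hseq : Tendsto t atTop (𝓝[>] (0 : ℝ)) := tendsto_seq_nhdsGT ht0 htlim
  set A : ℕ → Mat m n := fun k => X + t k • H + (t k ^ 2 / 2) • (0 : Mat m n) with hA
  set y : ℕ → Fin n → ℝ := fun k => svals X + t k • ds H + (t k ^ 2 / 2) • u' k with hy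
  have happrox : ∀ k, ∃ B : Mat m n, svals B = sortDesc (fun i => |y k i|) ∧
      fnorm (B - A k) = vnorm (y k - svals (A k)) := fun k => approx_matrix hmn (A k) (y k)
  choose B hBsv hBdist using happrox
  have hBΔ : ∀ k, svals (B k) ∈ Δ := by
    intro k
    rw [hBsv k]
    obtain ⟨Q, hQ, hQeq⟩ := sortDesc_abs_signedPerm (y k)
    rw [hQeq]
    exact hΔ Q hQ (y k) (hmem k)
  set W' : ℕ → Mat m n := fun k => (2 / t k ^ 2) • (B k - A k) with hW'
  have hA0 : ∀ k, A k = X + t k • H := by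
    intro k
    rw [hA]
    show X + t k • H + (t k ^ 2 / 2) • (0 : Mat m n) = X + t k • H
    rw [smul_zero, add_zero]
  have hXW' : ∀ k, X + t k • H + (t k ^ 2 / 2) • W' k = B k := by
    intro k
    have htk := ht0 k
    rw [hW']
    show X + t k • H + (t k ^ 2 / 2) • ((2 / t k ^ 2) • (B k - A k)) = B k
    rw [smul_smul]
    have hcoef : (t k ^ 2 / 2) * (2 / t k ^ 2) = 1 := by field_simp
    rw [hcoef, one_smul, ← hA0 k]
    calc A k + (B k - A k) = (B k - A k) + A k := by rw [add_comm]
      _ = B k := sub_add_cancel _ _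
  set q0 : ℝ → Fin n → ℝ := fun tt => pquot X (ds H) H 0 tt with hq0def
  have hq0 : Tendsto q0 (𝓝[>] (0 : ℝ)) (𝓝 (dds H 0)) :=
    tendsto_pi_nhds.mpr (fun s => hdds 0 s)
  set g : ℕ → ℝ := fun k => vnorm (u' k - q0 (t k)) with hg
  have hglim : Tendsto g atTop (𝓝 (vnorm (u - dds H 0))) :=
    tendsto_vnorm_sub hulim (hq0.comp hseq)
  obtain ⟨c, hc⟩ := hglim.bddAbove_range
  have hgc : ∀ k, g k ≤ c := fun k => hc ⟨k, rfl⟩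
  have hfW' : ∀ k, fnorm (W' k) = g k := by
    intro k
    have htk := ht0 k
    have h2 : y k - svals (A k) = (t k ^ 2 / 2) • (u' k - q0 (t k)) := by
      have hexp := pquot_expand X (ds H) H 0 (ne_of_gt htk)
      rw [hy, smul_sub, hq0def]
      rw [show svals (A k) = svals X + t k • ds H + (t k ^ 2 / 2) • pquot X (ds H) H 0 (t k) from
        hexp.symm]
      beta_reduce
      abel
    rw [hW']
    show fnorm ((2 / t k ^ 2) • (B k - A k)) = g k
    rw [fnorm_smul, hBdist, h2, vnorm_smul]
    rw [abs_of_pos (by positivity : (0:ℝ) < 2 / t k ^ 2),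
      abs_of_pos (by positivity : (0:ℝ) < t k ^ 2 / 2), ← mul_assoc]
    have : 2 / t k ^ 2 * (t k ^ 2 / 2) = 1 := by field_simp
    rw [this, one_mul, hg]
  -- compactness argument
  set S : Set (Mat m n) := {M : Mat m n | ∀ i j, M i j ∈ Set.Icc (-c) c} with hS
  have hScompact : IsCompact S := by
    have hSeq : S = Set.univ.pi (fun _ : Fin m => Set.univ.pi
        (fun _ : Fin n => Set.Icc (-c) c)) := by
      ext M
      exact ⟨fun h i _ j _ => h i j, fun h i j => h i (Set.mem_univ i) j (Set.mem_univ j)⟩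
    rw [hSeq]
    exact isCompact_univ_pi fun i => isCompact_univ_pi fun j => isCompact_Icc
  haveI : FirstCountableTopology (Mat m n) :=
    inferInstanceAs (FirstCountableTopology (Fin m → Fin n → ℝ))
  have hmemS : ∀ k, W' k ∈ S := by
    intro k i j
    apply Set.mem_Icc.mpr
    have h1 : |W' k i j| ≤ c := le_trans (abs_le_fnorm (W' k) i j) (by rw [hfW' k]; exact hgc k)
    exact abs_le.mp h1
  obtain ⟨Wst, _, φ, hφ, hconv⟩ := hScompact.tendsto_subseq hmemS
  refine ⟨Wst, fun k => t (φ k), fun k => W' (φ k), fun k => ht0 (φ k),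
    htlim.comp hφ.tendsto_atTop, hconv, ?_⟩
  intro k
  show svals (X + t (φ k) • H + (t (φ k) ^ 2 / 2) • W' (φ k)) ∈ Δ
  rw [hXW' (φ k)]
  exact hBΔ (φ k)

/-- Lifting a parabolic arc from `Δ` to `Γ`. -/
lemma arc_lift (hmn : n ≤ m) (Δ : Set (Fin n → ℝ)) (hΔ : AbsSymSet Δ)
    (X : Mat m n) (ds : Mat m n → Fin n → ℝ) (dds : Mat m n → Mat m n → Fin n → ℝ)
    (H : Mat m n)
    (hdds : ∀ W s, Tendsto (fun t : ℝ =>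
        (svals (X + t • H + (t ^ 2 / 2) • W) s - svals X s - t * ds H s) / (t ^ 2 / 2))
      (𝓝[>] (0 : ℝ)) (𝓝 (dds H W s)))
    (W : Mat m n) (ε : ℝ) (hε : ε > 0) (ζ : ℝ → Fin n → ℝ)
    (hζΔ : ∀ t ∈ Set.Icc (0:ℝ) ε, ζ t ∈ Δ) (hζ0 : ζ 0 = svals X)
    (hζ1 : Tendsto (fun t : ℝ => t⁻¹ • (ζ t - svals X)) (𝓝[>] (0:ℝ)) (𝓝 (ds H)))
    (hζ2 : Tendsto (fun t : ℝ => (2 / t ^ 2) • (ζ t - svals X - t • ds H)) (𝓝[>] (0:ℝ))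
      (𝓝 (dds H W))) :
    ∃ ε' > (0:ℝ), ∃ ξ : ℝ → Mat m n,
      (∀ t ∈ Set.Icc (0:ℝ) ε', ξ t ∈ {Y : Mat m n | svals Y ∈ Δ}) ∧ ξ 0 = X ∧
      Tendsto (fun t : ℝ => t⁻¹ • (ξ t - X)) (𝓝[>] (0:ℝ)) (𝓝 H) ∧
      Tendsto (fun t : ℝ => (2 / t ^ 2) • (ξ t - X - t • H)) (𝓝[>] (0:ℝ)) (𝓝 W) := by
  set Af : ℝ → Mat m n := fun t => X + t • H + (t ^ 2 / 2) • W with hAf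
  have hsvd : ∀ t : ℝ, ∃ (U : Matrix (Fin m) (Fin m) ℝ) (V : Matrix (Fin n) (Fin n) ℝ),
      Uᵀ * U = 1 ∧ Vᵀ * V = 1 ∧ Af t = U * mdiag (m := m) (svals (Af t)) * Vᵀ :=
    fun t => exists_svd hmn (Af t)
  choose U V hU hV hAeq using hsvd
  set ξ : ℝ → Mat m n := fun t => U t * (mdiag (ζ t) : Mat m n) * (V t)ᵀ with hξ
  have hξsv : ∀ t, svals (ξ t) = sortDesc (fun i => |ζ t i|) :=
    fun t => svals_conj hmn (hU t) (hV t) (ζ t)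
  -- the quotients
  set q : ℝ → Fin n → ℝ := fun t => pquot X (ds H) H W t with hqdef
  have hq : Tendsto q (𝓝[>] (0 : ℝ)) (𝓝 (dds H W)) := tendsto_pi_nhds.mpr (fun s => hdds W s)
  set r : ℝ → Fin n → ℝ := fun t => (2 / t ^ 2) • (ζ t - svals X - t • ds H) with hrdef
  have hr : Tendsto r (𝓝[>] (0 : ℝ)) (𝓝 (dds H W)) := hζ2
  have hrq : Tendsto (fun t => vnorm (r t - q t)) (𝓝[>] (0:ℝ)) (𝓝 0) := by
    have := tendsto_vnorm_sub hr hq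
    rwa [sub_self, vnorm_zero] at this
  -- the difference bound
  have hDnorm : ∀ t : ℝ, 0 < t → fnorm (ξ t - Af t) = (t ^ 2 / 2) * vnorm (r t - q t) := by
    intro t ht
    have hD : ξ t - Af t = U t * (mdiag (ζ t - svals (Af t)) : Mat m n) * (V t)ᵀ := by
      rw [mdiag_sub, Matrix.mul_sub, Matrix.sub_mul, ← hAeq t]
    have hzeta : ζ t = svals X + t • ds H + (t ^ 2 / 2) • r t := by
      rw [hrdef]
      show ζ t = svals X + t • ds H + (t ^ 2 / 2) • ((2 / t ^ 2) • (ζ t - svals X - t • ds H))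
      rw [smul_smul]
      have hcoef : (t ^ 2 / 2) * (2 / t ^ 2) = 1 := by
        field_simp
      rw [hcoef, one_smul]
      abel
    have hsA : svals (Af t) = svals X + t • ds H + (t ^ 2 / 2) • q t :=
      (pquot_expand X (ds H) H W (ne_of_gt ht)).symm
    have hdiff : ζ t - svals (Af t) = (t ^ 2 / 2) • (r t - q t) := by
      rw [hzeta, hsA, smul_sub]
      abel
    rw [hD, fnorm_conj (hU t) (hV t), fnorm_mdiag hmn, hdiff, vnorm_smul,
      abs_of_pos (by positivity : (0:ℝ) < t ^ 2 / 2)]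
  have hAX : ∀ t : ℝ, Af t - X = t • H + (t ^ 2 / 2) • W := by
    intro t
    rw [hAf]
    show X + t • H + (t ^ 2 / 2) • W - X = t • H + (t ^ 2 / 2) • W
    rw [add_assoc]
    exact add_sub_cancel_left X _
  have htid : Tendsto (fun t : ℝ => t) (𝓝[>] (0:ℝ)) (𝓝 0) :=
    tendsto_id.mono_right nhdsWithin_le_nhds
  refine ⟨ε, hε, ξ, ?_, ?_, ?_, ?_⟩
  · intro t ht
    show svals (ξ t) ∈ Δ
    rw [hξsv t]
    obtain ⟨Q, hQ, hQeq⟩ := sortDesc_abs_signedPerm (ζ t)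
    rw [hQeq]
    exact hΔ Q hQ (ζ t) (hζΔ t ht)
  · -- ξ 0 = X
    have hA0 : Af 0 = X := by
      rw [hAf]
      show X + (0:ℝ) • H + ((0:ℝ) ^ 2 / 2) • W = X
      rw [zero_smul, add_zero]
      have : ((0:ℝ) ^ 2 / 2) = 0 := by norm_num
      rw [this, zero_smul, add_zero]
    have := hAeq 0
    rw [hA0] at this
    rw [hξ]
    show U 0 * (mdiag (ζ 0) : Mat m n) * (V 0)ᵀ = X
    rw [hζ0]
    exact this.symm
  · -- first-order limit
    apply tendsto_of_fnorm_le
      (g := fun t => (t / 2) * vnorm (r t - q t) + (t / 2) * fnorm W)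
    · have h1 : Tendsto (fun t : ℝ => (t / 2) * vnorm (r t - q t)) (𝓝[>] (0:ℝ)) (𝓝 0) := by
        have := (htid.div_const 2).mul hrq
        simpa using this
      have h2 : Tendsto (fun t : ℝ => (t / 2) * fnorm W) (𝓝[>] (0:ℝ)) (𝓝 0) := by
        have := (htid.div_const 2).mul_const (fnorm W)
        simpa using this
      have := h1.add h2
      simpa using this
    · filter_upwards [self_mem_nhdsWithin] with t ht
      have ht' : (0:ℝ) < t := ht
      have hsplit : t⁻¹ • (ξ t - X) - H = t⁻¹ • (ξ t - Af t) + (t / 2) • W := by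
        have h1 : ξ t - X = (ξ t - Af t) + (Af t - X) := (sub_add_sub_cancel _ _ _).symm
        rw [h1, hAX t, smul_add, smul_add, smul_smul, smul_smul,
          inv_mul_cancel₀ (ne_of_gt ht'), one_smul]
        have hcoef : t⁻¹ * (t ^ 2 / 2) = t / 2 := by
          field_simp
        rw [hcoef]
        abel
      rw [hsplit]
      calc fnorm (t⁻¹ • (ξ t - Af t) + (t / 2) • W)
          ≤ fnorm (t⁻¹ • (ξ t - Af t)) + fnorm ((t / 2) • W) := fnorm_add_le _ _
        _ = (t / 2) * vnorm (r t - q t) + (t / 2) * fnorm W := by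
            rw [fnorm_smul, fnorm_smul, hDnorm t ht', abs_of_pos (inv_pos.mpr ht'),
              abs_of_pos (by positivity : (0:ℝ) < t / 2), ← mul_assoc]
            congr 2
            field_simp
  · -- second-order limit
    apply tendsto_of_fnorm_le (g := fun t => vnorm (r t - q t))
    · exact hrq
    · filter_upwards [self_mem_nhdsWithin] with t ht
      have ht' : (0:ℝ) < t := ht
      have hsplit : (2 / t ^ 2) • (ξ t - X - t • H) - W = (2 / t ^ 2) • (ξ t - Af t) := by
        have h0 : Af t - X - t • H = (t ^ 2 / 2) • W := by
          rw [hAX t]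
          exact add_sub_cancel_left _ _
        have h1 : ξ t - X - t • H = (ξ t - Af t) + (t ^ 2 / 2) • W := by
          rw [← h0]
          rw [sub_sub, sub_sub]
          exact (sub_add_sub_cancel _ _ _).symm
        rw [h1, smul_add, smul_smul]
        have hcoef : (2 / t ^ 2) * (t ^ 2 / 2) = 1 := by
          field_simp
        rw [hcoef, one_smul]
        exact add_sub_cancel_right _ W
      rw [hsplit, fnorm_smul, hDnorm t ht', abs_of_pos (by positivity : (0:ℝ) < 2 / t ^ 2),
        ← mul_assoc]
      have : 2 / t ^ 2 * (t ^ 2 / 2) = 1 := by field_simp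
      rw [this, one_mul]

end Main2

end Aux
/-- Second-order tangent sets of orthogonally invariant matrix sets:
`T²_Γ(X,H) = {W : σ''(X;H,W) ∈ T²_Δ(σ(X), σ'(X;H))}`, and parabolic derivability
of `Δ` at `σ(X)` for `σ'(X;H)` implies that of `Γ` at `X` for `H`. -/
theorem stmt9 {m n : ℕ} (hmn : n ≤ m) (Δ : Set (Fin n → ℝ)) (hΔ : AbsSymSet Δ)
    (X : Mat m n) (hX : svals X ∈ Δ)
    (ds : Mat m n → Fin n → ℝ) (dds : Mat m n → Mat m n → Fin n → ℝ)
    (hds : ∀ H s, Tendsto (fun t : ℝ => (svals (X + t • H) s - svals X s) / t)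
      (𝓝[>] (0 : ℝ)) (𝓝 (ds H s)))
    (hdds : ∀ H W s, Tendsto (fun t : ℝ =>
        (svals (X + t • H + (t ^ 2 / 2) • W) s - svals X s - t * ds H s) / (t ^ 2 / 2))
      (𝓝[>] (0 : ℝ)) (𝓝 (dds H W s)))
    (H : Mat m n) (hH : H ∈ tangentConeOf {Y : Mat m n | svals Y ∈ Δ} X) :
    tangentCone2Of {Y : Mat m n | svals Y ∈ Δ} X H =
      {W : Mat m n | dds H W ∈ tangentCone2Of Δ (svals X) (ds H)} ∧
    (ParabolicallyDerivable Δ (svals X) (ds H) →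
      ParabolicallyDerivable {Y : Mat m n | svals Y ∈ Δ} X H) := by
  have hdds' : ∀ W s, Tendsto (fun t : ℝ =>
      (svals (X + t • H + (t ^ 2 / 2) • W) s - svals X s - t * ds H s) / (t ^ 2 / 2))
      (𝓝[>] (0 : ℝ)) (𝓝 (dds H W s)) := fun W s => hdds H W s
  have hEq : tangentCone2Of {Y : Mat m n | svals Y ∈ Δ} X H =
      {W : Mat m n | dds H W ∈ tangentCone2Of Δ (svals X) (ds H)} := by
    ext W
    simp only [Set.mem_setOf_eq]
    constructor
    · exact fun h => Aux.forward_incl Δ X ds dds H hdds' W h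
    · exact fun h => Aux.backward_incl Δ X ds dds H hmn hΔ hdds' W h
  refine ⟨hEq, fun hPD => ⟨?_, ?_⟩⟩
  · exact Aux.nonempty_T2 hmn Δ hΔ X ds dds H hdds' hPD.1
  · intro u hu
    have hu' : dds H u ∈ tangentCone2Of Δ (svals X) (ds H) :=
      Aux.forward_incl Δ X ds dds H hdds' u hu
    obtain ⟨ε, hε, ζ, h1, h2, h3, h4⟩ := hPD.2 (dds H u) hu'
    exact Aux.arc_lift hmn Δ hΔ X ds dds H hdds' u ε hε ζ h1 h2 h3 h4
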